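/- arXiv:1110.2447 — 2 statements merged into one kernel-verified Lean document; each statement's English description precedes it below -/
import Mathlib

section
/- Let E be an n-dimensional real inner product space and A : E → E an invertible self-adjoint linear map with K = tr|A|·id + Â as above. If det A > 0 then ker K is spanned by an element of the even exterior algebra Λ^{even}E^*, and if det A < 0 then ker K is spanned by an element of Λ^{odd}E^*. -/
/- We model the exterior algebra `Λ*E^*` of a finite-dimensional real inner product
space `E` by `ExteriorAlgebra ℝ E`, identifying `E ≅ E^*` via the inner product.
`extMul v` is exterior multiplication by `v^*` and `intMul v` is interior
multiplication (contraction) by `v`. -/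

open ExteriorAlgebra RealInnerProductSpace
set_option linter.unusedSectionVars false

variable {E : Type*} [NormedAddCommGroup E] [InnerProductSpace ℝ E] [FiniteDimensional ℝ E]

/-- Exterior multiplication `v^* ∧ ·` on `Λ*E^*` (under `E ≅ E^*`). -/
noncomputable def extMul (v : E) : ExteriorAlgebra ℝ E →ₗ[ℝ] ExteriorAlgebra ℝ E :=
  LinearMap.mulLeft ℝ (ExteriorAlgebra.ι ℝ v)

/-- Interior multiplication (contraction) `ι_v` on `Λ*E^*`. -/
noncomputable def intMul (v : E) : ExteriorAlgebra ℝ E →ₗ[ℝ] ExteriorAlgebra ℝ E :=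
  CliffordAlgebra.contractLeft ((innerSL ℝ v).toLinearMap)

/-- The Clifford action `c(v) = v^* ∧ · - ι_v`. -/
noncomputable def cl (v : E) : ExteriorAlgebra ℝ E →ₗ[ℝ] ExteriorAlgebra ℝ E :=
  extMul v - intMul v

/-- The Clifford action `ĉ(v) = v^* ∧ · + ι_v`. -/
noncomputable def hcl (v : E) : ExteriorAlgebra ℝ E →ₗ[ℝ] ExteriorAlgebra ℝ E :=
  extMul v + intMul v

/-- The operator `Â = Σ_{ij} a_{ij} c(e_i) ĉ(e_j)` associated to a linear map `A`
and a (orthonormal) family `e`, where `a_{ij} = ⟨A e_j, e_i⟩` is the matrix of `A`. -/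
noncomputable def hatA {n : ℕ} (e : Fin n → E) (A : E →ₗ[ℝ] E) :
    ExteriorAlgebra ℝ E →ₗ[ℝ] ExteriorAlgebra ℝ E :=
  ∑ i, ∑ j, ⟪A (e j), e i⟫ • (cl (e i) ∘ₗ hcl (e j))

/-- `K = tr|A|·id + Â`, where `tr|A|` is the sum of the absolute values of the
eigenvalues of the self-adjoint map `A`. -/
noncomputable def Kop {n : ℕ} (hn : Module.finrank ℝ E = n) (e : Fin n → E)
    (A : E →ₗ[ℝ] E) (hA : A.IsSymmetric) :
    ExteriorAlgebra ℝ E →ₗ[ℝ] ExteriorAlgebra ℝ E :=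
  (∑ i, |hA.eigenvalues hn i|) • LinearMap.id + hatA e A

lemma extMul_apply (v : E) (x : ExteriorAlgebra ℝ E) : extMul v x = ι ℝ v * x := rfl

lemma intMul_ι_mul (v w : E) (x : ExteriorAlgebra ℝ E) :
    intMul v (ι ℝ w * x) = ⟪v, w⟫ • x - ι ℝ w * intMul v x := by
  simpa [intMul] using CliffordAlgebra.contractLeft_ι_mul ((innerSL ℝ v).toLinearMap) w x

lemma intMul_one (v : E) : intMul v (1 : ExteriorAlgebra ℝ E) = 0 :=
  CliffordAlgebra.contractLeft_one _ _

lemma intMul_intMul (v : E) (x : ExteriorAlgebra ℝ E) : intMul v (intMul v x) = 0 :=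
  CliffordAlgebra.contractLeft_contractLeft _ _

lemma clhcl_apply (v : E) (x : ExteriorAlgebra ℝ E) :
    (cl v ∘ₗ hcl v) x = ι ℝ v * intMul v x - intMul v (ι ℝ v * x) := by
  simp only [LinearMap.comp_apply, cl, hcl, LinearMap.sub_apply, LinearMap.add_apply, map_add,
    extMul_apply, intMul_intMul]
  have h1 : ι ℝ v * (ι ℝ v * x) = 0 := by rw [← mul_assoc, ι_sq_zero, zero_mul]
  rw [h1]
  abel

-- linearity of cl, hcl in v
lemma extMul_add (u v : E) : extMul (u + v) = extMul u + extMul v := by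
  ext x; simp [extMul_apply, LinearMap.add_apply, map_add, add_mul]

lemma extMul_smul (c : ℝ) (v : E) : extMul (c • v) = c • extMul v := by
  ext x; simp [extMul_apply, LinearMap.smul_apply, map_smul, smul_mul_assoc]

lemma intMul_add (u v : E) : intMul (u + v) = intMul u + intMul v := by
  simp only [intMul]
  rw [← map_add]
  congr 1
  ext w
  simp [inner_add_left]

lemma intMul_smul (c : ℝ) (v : E) : intMul (c • v) = c • intMul v := by
  simp only [intMul]
  rw [← map_smul]
  congr 1
  ext w
  simp [inner_smul_left]

section Words
variable {n : ℕ} (f : Fin n → E)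

/-- Product of generators indexed by a list. -/
noncomputable def wprod (L : List (Fin n)) : ExteriorAlgebra ℝ E :=
  (L.map fun k => ι ℝ (f k)).prod

@[simp] lemma wprod_nil : wprod f ([] : List (Fin n)) = 1 := rfl

@[simp] lemma wprod_cons (a : Fin n) (L : List (Fin n)) :
    wprod f (a :: L) = ι ℝ (f a) * wprod f L := by
  simp [wprod]

variable {f}

lemma intMul_wprod_of_not_mem (horth : Orthonormal ℝ f) {k : Fin n} :
    ∀ {L : List (Fin n)}, k ∉ L → intMul (f k) (wprod f L) = 0 := by
  intro L
  induction L with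
  | nil => intro _; simpa using intMul_one (f k)
  | cons a L ih =>
    intro hk
    have hka : k ≠ a := fun h => hk (h ▸ List.mem_cons_self (a := a) (l := L))
    have hmem : k ∉ L := fun h => hk (List.mem_cons_of_mem a h)
    rw [wprod_cons, intMul_ι_mul, ih hmem, mul_zero, sub_zero,
      orthonormal_iff_ite.mp horth k a, if_neg hka, zero_smul]

lemma wprod_extract {k : Fin n} :
    ∀ {L : List (Fin n)}, L.Nodup → k ∈ L →
      ∃ (s : ℝ) (L' : List (Fin n)), L'.Nodup ∧ k ∉ L' ∧ (∀ j ∈ L', j ∈ L) ∧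
        wprod f L = s • (ι ℝ (f k) * wprod f L') := by
  intro L
  induction L with
  | nil => intro _ h; exact absurd h (List.not_mem_nil (a := k))
  | cons a L ih =>
    intro hnd hk
    have hnd' : L.Nodup := hnd.of_cons
    by_cases hka : k = a
    · subst hka
      refine ⟨1, L, hnd', (List.nodup_cons.mp hnd).1, fun j hj => List.mem_cons_of_mem _ hj, ?_⟩
      simp
    · have hkL : k ∈ L := by
        rcases List.mem_cons.mp hk with h | h
        · exact absurd h hka
        · exact h
      obtain ⟨s, L', hL'nd, hkL', hsub, heq⟩ := ih hnd' hkL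
      have haL' : a ∉ L' := fun h => (List.nodup_cons.mp hnd).1 (hsub a h)
      refine ⟨-s, a :: L', List.nodup_cons.mpr ⟨haL', hL'nd⟩,
        fun h => (by rcases List.mem_cons.mp h with h | h; exact hka h; exact hkL' h),
        fun j hj => (by rcases List.mem_cons.mp hj with h | h
                        · exact h ▸ List.mem_cons_self (a := a) (l := L)
                        · exact List.mem_cons_of_mem a (hsub j h)), ?_⟩
      rw [wprod_cons, heq, wprod_cons]
      have hswap : ι ℝ (f a) * ι ℝ (f k) = -(ι ℝ (f k) * ι ℝ (f a)) :=
        eq_neg_of_add_eq_zero_left (ι_add_mul_swap _ _)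
      rw [mul_smul_comm, ← mul_assoc, hswap]
      simp [mul_assoc]

lemma wprod_perm {L M : List (Fin n)} (h : L.Perm M) :
    ∃ c : ℝ, wprod f L = c • wprod f M := by
  induction h with
  | nil => exact ⟨1, by simp⟩
  | cons a _ ih =>
    obtain ⟨c, hc⟩ := ih
    exact ⟨c, by rw [wprod_cons, hc, mul_smul_comm, wprod_cons]⟩
  | swap a b L =>
    refine ⟨-1, ?_⟩
    have hswap : ι ℝ (f b) * ι ℝ (f a) = -(ι ℝ (f a) * ι ℝ (f b)) :=
      eq_neg_of_add_eq_zero_left (ι_add_mul_swap _ _)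
    rw [wprod_cons, wprod_cons, wprod_cons, wprod_cons, ← mul_assoc, ← mul_assoc, hswap]
    simp
  | trans _ _ ih1 ih2 =>
    obtain ⟨c1, hc1⟩ := ih1
    obtain ⟨c2, hc2⟩ := ih2
    exact ⟨c1 * c2, by rw [hc1, hc2, smul_smul]⟩

lemma clhcl_wprod (horth : Orthonormal ℝ f) (k : Fin n) {L : List (Fin n)} (hnd : L.Nodup) :
    (cl (f k) ∘ₗ hcl (f k)) (wprod f L) =
      (if k ∈ L then (1:ℝ) else -1) • wprod f L := by
  have hkk : ⟪f k, f k⟫ = (1:ℝ) := by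
    have := (orthonormal_iff_ite (𝕜 := ℝ) (v := f)).mp horth k k
    simpa using this
  rw [clhcl_apply]
  by_cases hk : k ∈ L
  · obtain ⟨s, L', hL'nd, hkL', _, heq⟩ := wprod_extract (f := f) hnd hk
    have h0 : intMul (f k) (wprod f L') = 0 := intMul_wprod_of_not_mem horth hkL'
    have h1 : intMul (f k) (wprod f L) = s • wprod f L' := by
      rw [heq, map_smul, intMul_ι_mul, h0, mul_zero, sub_zero, hkk, one_smul]
    have h2 : ι ℝ (f k) * wprod f L = 0 := by
      rw [heq, mul_smul_comm, ← mul_assoc, ι_sq_zero, zero_mul, smul_zero]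
    rw [h1, h2, map_zero, sub_zero, mul_smul_comm, ← heq, if_pos hk, one_smul]
  · have h0 : intMul (f k) (wprod f L) = 0 := intMul_wprod_of_not_mem horth hk
    rw [h0, mul_zero, intMul_ι_mul, h0, mul_zero, sub_zero, hkk, one_smul, zero_sub,
      if_neg hk, neg_smul, one_smul]

end Words

section Span
variable {n : ℕ}

lemma span_nodup_wprod (b : OrthonormalBasis (Fin n) ℝ E) :
    Submodule.span ℝ {x : ExteriorAlgebra ℝ E | ∃ L : List (Fin n), L.Nodup ∧ wprod (⇑b) L = x}
      = ⊤ := by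
  set S : Set (ExteriorAlgebra ℝ E) := {x | ∃ L : List (Fin n), L.Nodup ∧ wprod (⇑b) L = x}
    with hS
  set W := Submodule.span ℝ S with hW
  rw [eq_top_iff]
  have hone : (1 : ExteriorAlgebra ℝ E) ∈ W :=
    Submodule.subset_span ⟨[], List.nodup_nil, rfl⟩
  have hιk : ∀ k : Fin n, ∀ y ∈ W, ι ℝ (b k) * y ∈ W := by
    intro k y hy
    have : W ≤ W.comap (LinearMap.mulLeft ℝ (ι ℝ (b k))) := by
      rw [hW, Submodule.span_le]
      rintro x ⟨L, hnd, rfl⟩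
      simp only [SetLike.mem_coe, Submodule.mem_comap, LinearMap.mulLeft_apply]
      by_cases hk : k ∈ L
      · obtain ⟨s, L', _, _, _, heq⟩ := wprod_extract (f := ⇑b) hnd hk
        rw [heq, mul_smul_comm, ← mul_assoc, ι_sq_zero, zero_mul, smul_zero]
        exact W.zero_mem
      · have : ι ℝ (b k) * wprod (⇑b) L = wprod (⇑b) (k :: L) := (wprod_cons _ _ _).symm
        rw [this]
        exact Submodule.subset_span ⟨k :: L, List.nodup_cons.mpr ⟨hk, hnd⟩, rfl⟩
    exact this hy
  have hιv : ∀ v : E, ∀ y ∈ W, ι ℝ v * y ∈ W := by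
    intro v y hy
    have hv : v = ∑ k, ⟪b k, v⟫ • b k := (b.sum_repr' v).symm
    have heq : ι ℝ v * y = ∑ k, ⟪b k, v⟫ • (ι ℝ (b k) * y) := by
      conv_lhs => rw [hv]
      rw [map_sum, Finset.sum_mul]
      simp [smul_mul_assoc]
    rw [heq]
    exact Submodule.sum_mem _ fun k _ => Submodule.smul_mem _ _ (hιk k y hy)
  have hmain : ∀ x : ExteriorAlgebra ℝ E, ∀ y ∈ W, x * y ∈ W := by
    intro x
    induction x using ExteriorAlgebra.induction with
    | algebraMap r => intro y hy; rw [← Algebra.smul_def]; exact Submodule.smul_mem _ _ hy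
    | ι v => exact hιv v
    | mul a c iha ihc => intro y hy; rw [mul_assoc]; exact iha _ (ihc y hy)
    | add a c iha ihc => intro y hy; rw [add_mul]; exact Submodule.add_mem _ (iha y hy) (ihc y hy)
  intro x _
  simpa using hmain x 1 hone

end Span

section KerLemma

lemma ker_eq_span_of_eigen {V : Type*} [AddCommGroup V] [Module ℝ V]
    (T : V →ₗ[ℝ] V) (S : Set V) (ω : V)
    (hspan : Submodule.span ℝ S = ⊤)
    (heig : ∀ x ∈ S, ∃ c : ℝ, T x = c • x ∧ (c = 0 → x ∈ Submodule.span ℝ {ω}))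
    (hω : T ω = 0) :
    LinearMap.ker T = Submodule.span ℝ {ω} := by
  have hωe : (Submodule.span ℝ {ω} : Submodule ℝ V) ≤ Module.End.eigenspace T 0 := by
    rw [Submodule.span_le, Set.singleton_subset_iff, SetLike.mem_coe,
      Module.End.mem_eigenspace_iff, hω, zero_smul]
  set V' : ℝ → Submodule ℝ V := fun c =>
    if c = 0 then Submodule.span ℝ {ω} else Module.End.eigenspace T c with hV'
  have hVle : ∀ c, V' c ≤ Module.End.eigenspace T c := by
    intro c
    by_cases h : c = 0
    · subst h; simpa [hV'] using hωe
    · simp [hV', h]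
  have htop : (⊤ : Submodule ℝ V) ≤ ⨆ c, V' c := by
    rw [← hspan, Submodule.span_le]
    intro x hx
    obtain ⟨c, hTx, hc0⟩ := heig x hx
    by_cases h : c = 0
    · exact le_iSup V' 0 (by simpa [hV'] using hc0 h)
    · exact le_iSup V' c (by simp only [hV', if_neg h]
                             exact Module.End.mem_eigenspace_iff.mpr hTx)
  apply le_antisymm
  · intro x hx
    have hx0 : x ∈ Module.End.eigenspace T 0 := by
      rw [Module.End.mem_eigenspace_iff, zero_smul]; exact hx
    have hsplit : (⨆ c, V' c) ≤ V' 0 ⊔ ⨆ c, ⨆ _ : c ≠ 0, V' c := by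
      refine iSup_le fun c => ?_
      by_cases h : c = 0
      · subst h; exact le_sup_left
      · exact le_sup_of_le_right (le_iSup₂ (f := fun c (_ : c ≠ 0) => V' c) c h)
    obtain ⟨y, hy, z, hz, hyz⟩ := Submodule.mem_sup.mp (hsplit (htop (Submodule.mem_top (x := x))))
    have hy' : y ∈ Submodule.span ℝ {ω} := by simpa [hV'] using hy
    have hz' : z ∈ ⨆ c, ⨆ _ : c ≠ 0, Module.End.eigenspace T c :=
      (iSup_mono fun c => iSup_mono fun h => hVle c) hz
    have hz0 : z ∈ Module.End.eigenspace T 0 := by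
      have : z = x - y := by rw [← hyz]; abel
      rw [this]
      exact Submodule.sub_mem _ hx0 (hωe hy')
    have hdisj := Module.End.eigenspaces_iSupIndep (R := ℝ) (M := V) T 0
    have hz00 : z = 0 := by
      have := Submodule.disjoint_def.mp hdisj z hz0 hz'
      exact this
    rw [← hyz, hz00, add_zero]
    exact hy'
  · rw [Submodule.span_le, Set.singleton_subset_iff, SetLike.mem_coe, LinearMap.mem_ker]
    exact hω

end KerLemma

section Diag

lemma cl_add (u v : E) : cl (u + v) = cl u + cl v := by
  simp only [cl, extMul_add, intMul_add]; abel

lemma cl_smul (c : ℝ) (v : E) : cl (c • v) = c • cl v := by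
  simp only [cl, extMul_smul, intMul_smul, smul_sub]

lemma hcl_add (u v : E) : hcl (u + v) = hcl u + hcl v := by
  simp only [hcl, extMul_add, intMul_add]; abel

lemma hcl_smul (c : ℝ) (v : E) : hcl (c • v) = c • hcl v := by
  simp only [hcl, extMul_smul, intMul_smul, smul_add]

/-- `(u, v) ↦ cl u ∘ₗ hcl v` as a bilinear map. -/
noncomputable def Bop : E →ₗ[ℝ] E →ₗ[ℝ] (ExteriorAlgebra ℝ E →ₗ[ℝ] ExteriorAlgebra ℝ E) :=
  LinearMap.mk₂ ℝ (fun u v => cl u ∘ₗ hcl v)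
    (fun u u' v => by rw [cl_add, LinearMap.add_comp])
    (fun c u v => by rw [cl_smul, LinearMap.smul_comp])
    (fun u v v' => by rw [hcl_add, LinearMap.comp_add])
    (fun c u v => by rw [hcl_smul, LinearMap.comp_smul])

@[simp] lemma Bop_apply (u v : E) : Bop u v = cl u ∘ₗ hcl v := rfl

variable {n : ℕ}

noncomputable def hatA' (e : Fin n → E) (A : E →ₗ[ℝ] E) :
    ExteriorAlgebra ℝ E →ₗ[ℝ] ExteriorAlgebra ℝ E :=
  ∑ i, ∑ j, ⟪A (e j), e i⟫ • (cl (e i) ∘ₗ hcl (e j))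

lemma hatA'_eq_sum (e : OrthonormalBasis (Fin n) ℝ E) (A : E →ₗ[ℝ] E) :
    hatA' (⇑e) A = ∑ j, Bop (A (e j)) (e j) := by
  unfold hatA'
  rw [Finset.sum_comm]
  refine Finset.sum_congr rfl fun j _ => ?_
  have h : A (e j) = ∑ i, ⟪A (e j), e i⟫ • e i := by
    conv_lhs => rw [← e.sum_repr' (A (e j))]
    exact Finset.sum_congr rfl fun i _ => by rw [real_inner_comm]
  conv_rhs => rw [h]
  rw [map_sum, LinearMap.sum_apply]
  exact Finset.sum_congr rfl fun i _ => by rw [map_smul, LinearMap.smul_apply, Bop_apply]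

lemma hatA'_basis_change (e b : OrthonormalBasis (Fin n) ℝ E) (A : E →ₗ[ℝ] E)
    (hA : A.IsSymmetric) :
    hatA' (⇑e) A = ∑ k, ∑ l, ⟪A (b l), b k⟫ • Bop (b k) (b l) := by
  rw [hatA'_eq_sum]
  have expand : ∀ j, Bop (A (e j)) (e j)
      = ∑ k, ∑ l, (⟪A (b k), e j⟫ * ⟪e j, b l⟫) • Bop (b k) (b l) := by
    intro j
    have h1 : Bop (A (e j)) (e j) = ∑ k, ⟪b k, A (e j)⟫ • Bop (b k) (e j) := by
      conv_lhs => rw [← b.sum_repr' (A (e j))]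
      rw [map_sum, LinearMap.sum_apply]
      exact Finset.sum_congr rfl fun k _ => by rw [map_smul, LinearMap.smul_apply]
    have h2 : ∀ k, (Bop (b k)) (e j) = ∑ l, ⟪b l, e j⟫ • Bop (b k) (b l) := by
      intro k
      conv_lhs => rw [← b.sum_repr' (e j)]
      rw [map_sum]
      exact Finset.sum_congr rfl fun l _ => by rw [map_smul]
    rw [h1]
    refine Finset.sum_congr rfl fun k _ => ?_
    rw [h2 k, Finset.smul_sum]
    refine Finset.sum_congr rfl fun l _ => ?_
    rw [smul_smul]
    congr 1
    rw [← hA (b k) (e j), real_inner_comm (b l) (e j)]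
  rw [Finset.sum_congr rfl fun j _ => expand j, Finset.sum_comm]
  refine Finset.sum_congr rfl fun k _ => ?_
  rw [Finset.sum_comm]
  refine Finset.sum_congr rfl fun l _ => ?_
  rw [← Finset.sum_smul, e.sum_inner_mul_inner]
  congr 1
  rw [hA (b k) (b l), real_inner_comm]

lemma hatA'_diag (e : OrthonormalBasis (Fin n) ℝ E) (A : E →ₗ[ℝ] E)
    (hA : A.IsSymmetric) (b : OrthonormalBasis (Fin n) ℝ E) (lam : Fin n → ℝ)
    (hb : ∀ k, A (b k) = lam k • b k) :
    hatA' (⇑e) A = ∑ k, lam k • (cl (b k) ∘ₗ hcl (b k)) := by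
  rw [hatA'_basis_change e b A hA]
  refine Finset.sum_congr rfl fun k _ => ?_
  rw [Finset.sum_eq_single k]
  · rw [hb k, real_inner_smul_left]
    have : ⟪b k, b k⟫ = (1:ℝ) := by
      have := (orthonormal_iff_ite (𝕜 := ℝ) (v := ⇑b)).mp b.orthonormal k k
      simpa using this
    rw [this, mul_one, Bop_apply]
  · intro l _ hlk
    rw [hb l, real_inner_smul_left]
    have : ⟪b l, b k⟫ = (0:ℝ) := by
      have := (orthonormal_iff_ite (𝕜 := ℝ) (v := ⇑b)).mp b.orthonormal l k
      simpa [hlk] using this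
    rw [this, mul_zero, zero_smul]
  · intro h
    exact absurd (Finset.mem_univ k) h

end Diag

section DetParity
variable {n : ℕ}

lemma det_eq_prod_eig (b : OrthonormalBasis (Fin n) ℝ E) (A : E →ₗ[ℝ] E) (lam : Fin n → ℝ)
    (hb : ∀ k, A (b k) = lam k • b k) :
    LinearMap.det A = ∏ k, lam k := by
  rw [← LinearMap.det_toMatrix b.toBasis]
  have hM : LinearMap.toMatrix b.toBasis b.toBasis A = Matrix.diagonal lam := by
    ext i j
    rw [LinearMap.toMatrix_apply, OrthonormalBasis.coe_toBasis]
    rw [hb j, map_smul]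
    have hrepr : b.toBasis.repr (b j) = Finsupp.single j 1 := by
      have : b j = b.toBasis j := by rw [OrthonormalBasis.coe_toBasis]
      rw [this, Module.Basis.repr_self]
    rw [hrepr, Finsupp.smul_apply, Finsupp.single_apply, Matrix.diagonal_apply]
    by_cases h : i = j
    · subst h; simp
    · simp [h, Ne.symm h]
  rw [hM, Matrix.det_diagonal]

lemma wprod_mem_evenOdd (f : Fin n → E) (L : List (Fin n)) :
    wprod f L ∈ CliffordAlgebra.evenOdd (0 : QuadraticForm ℝ E) (L.length : ZMod 2) := by
  induction L with
  | nil =>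
    have h1 : ((List.length ([] : List (Fin n)) : ℕ) : ZMod 2) = 0 := by simp
    rw [wprod_nil, h1]
    exact SetLike.one_mem_graded _
  | cons a L ih =>
    have hcast : (((a :: L).length : ℕ) : ZMod 2) = 1 + (L.length : ZMod 2) := by
      rw [List.length_cons]
      push_cast
      ring
    rw [wprod_cons, hcast]
    exact SetLike.mul_mem_graded (CliffordAlgebra.ι_mem_evenOdd_one (0 : QuadraticForm ℝ E) (f a)) ih

end DetParity


/-- For an invertible self-adjoint `A` with `K = tr|A|·id + Â` : if `det A > 0` the
kernel of `K` is spanned by an element of the even part `Λ^{even}E^*`, and if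
`det A < 0` it is spanned by an element of the odd part `Λ^{odd}E^*`.
(The even/odd parts of `Λ*E^*` are `CliffordAlgebra.evenOdd 0 0/1`.) -/
theorem Kop_ker_even_odd {n : ℕ} (hn : Module.finrank ℝ E = n)
    (e : OrthonormalBasis (Fin n) ℝ E) (A : E →ₗ[ℝ] E)
    (hA : A.IsSymmetric) (hinv : Function.Bijective A) :
    (0 < LinearMap.det A → ∃ ω : ExteriorAlgebra ℝ E,
      ω ∈ CliffordAlgebra.evenOdd (0 : QuadraticForm ℝ E) 0 ∧
      LinearMap.ker (Kop hn (⇑e) A hA) = Submodule.span ℝ {ω}) ∧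
    (LinearMap.det A < 0 → ∃ ω : ExteriorAlgebra ℝ E,
      ω ∈ CliffordAlgebra.evenOdd (0 : QuadraticForm ℝ E) 1 ∧
      LinearMap.ker (Kop hn (⇑e) A hA) = Submodule.span ℝ {ω}) := by
  classical
  set f := hA.eigenvectorBasis hn with hf
  set lam := hA.eigenvalues hn with hlamdef
  have hfl : ∀ k, A (f k) = lam k • f k := fun k => hA.apply_eigenvectorBasis hn k
  have hlam0 : ∀ k, lam k ≠ 0 := by
    intro k h
    have h1 : A (f k) = A 0 := by rw [hfl k, h, zero_smul, map_zero]
    exact f.orthonormal.ne_zero k (hinv.injective h1)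
  set S₀ : Finset (Fin n) := Finset.univ.filter (fun k => lam k < 0) with hS₀
  set L₀ : List (Fin n) := S₀.sort (· ≤ ·) with hL₀def
  set ω : ExteriorAlgebra ℝ E := wprod (⇑f) L₀ with hωdef
  have hL₀nd : L₀.Nodup := S₀.sort_nodup _
  have hL₀mem : ∀ k, k ∈ L₀ ↔ lam k < 0 := by
    intro k
    rw [hL₀def, Finset.mem_sort, hS₀, Finset.mem_filter]
    simp
  -- diagonalized form of Kop
  have hhatA : hatA (⇑e) A = hatA' (⇑e) A := rfl
  have hKdiag : Kop hn (⇑e) A hA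
      = (∑ i, |lam i|) • LinearMap.id + ∑ k, lam k • (cl (f k) ∘ₗ hcl (f k)) := by
    rw [Kop, hhatA, hatA'_diag e A hA f lam hfl, hlamdef]
  -- action on nodup words
  have hmu : ∀ L : List (Fin n), L.Nodup → (Kop hn (⇑e) A hA) (wprod (⇑f) L)
      = (∑ k, (|lam k| + if k ∈ L then lam k else -lam k)) • wprod (⇑f) L := by
    intro L hnd
    rw [hKdiag]
    simp only [LinearMap.add_apply, LinearMap.smul_apply, LinearMap.id_apply,
      LinearMap.sum_apply]
    have hterm : ∀ k : Fin n, lam k • ((cl (f k) ∘ₗ hcl (f k)) (wprod (⇑f) L))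
        = (if k ∈ L then lam k else -lam k) • wprod (⇑f) L := by
      intro k
      rw [clhcl_wprod f.orthonormal k hnd, smul_smul]
      by_cases h : k ∈ L <;> simp [h]
    rw [Finset.sum_congr rfl fun k _ => hterm k, ← Finset.sum_smul, ← add_smul,
      ← Finset.sum_add_distrib]
  have htermnonneg : ∀ (L : List (Fin n)) (k : Fin n),
      0 ≤ |lam k| + if k ∈ L then lam k else -lam k := by
    intro L k
    by_cases h : k ∈ L <;> simp only [h, if_true, if_false] <;>
      [linarith [neg_abs_le (lam k)]; linarith [le_abs_self (lam k)]]
  have hμzero : ∀ L : List (Fin n),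
      ((∑ k, (|lam k| + if k ∈ L then lam k else -lam k)) = 0 ↔ ∀ k, (k ∈ L ↔ lam k < 0)) := by
    intro L
    rw [Finset.sum_eq_zero_iff_of_nonneg fun k _ => htermnonneg L k]
    constructor
    · intro h k
      have hk := h k (Finset.mem_univ k)
      by_cases hmem : k ∈ L
      · rw [if_pos hmem] at hk
        have : |lam k| = -lam k := by linarith
        have hle : lam k ≤ 0 := abs_eq_neg_self.mp this
        exact ⟨fun _ => lt_of_le_of_ne hle (hlam0 k), fun _ => hmem⟩
      · rw [if_neg hmem] at hk
        have : |lam k| = lam k := by linarith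
        have hge : 0 ≤ lam k := abs_eq_self.mp this
        exact ⟨fun hmem' => absurd hmem' hmem, fun hlt => absurd hge (not_le.mpr hlt)⟩
    · intro h k _
      by_cases hmem : k ∈ L
      · rw [if_pos hmem]
        have hlt : lam k < 0 := (h k).mp hmem
        rw [abs_of_neg hlt]; ring
      · rw [if_neg hmem]
        have hge : 0 ≤ lam k := by
          by_contra hlt
          exact hmem ((h k).mpr (not_le.mp hlt))
        rw [abs_of_nonneg hge]; ring
  have hKω : (Kop hn (⇑e) A hA) ω = 0 := by
    rw [hωdef, hmu L₀ hL₀nd, (hμzero L₀).mpr hL₀mem, zero_smul]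
  have hker : LinearMap.ker (Kop hn (⇑e) A hA) = Submodule.span ℝ {ω} := by
    apply ker_eq_span_of_eigen _ _ _ (span_nodup_wprod f) _ hKω
    rintro x ⟨L, hnd, rfl⟩
    refine ⟨∑ k, (|lam k| + if k ∈ L then lam k else -lam k), hmu L hnd, ?_⟩
    intro hc
    have hprop : ∀ k, k ∈ L ↔ lam k < 0 := (hμzero L).mp hc
    have hperm : L.Perm L₀ := (List.perm_ext_iff_of_nodup hnd hL₀nd).mpr fun k => by
      rw [hprop k, hL₀mem k]
    obtain ⟨c, hc'⟩ := wprod_perm (f := ⇑f) hperm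
    rw [hc']
    exact Submodule.smul_mem _ _ (Submodule.mem_span_singleton_self ω)
  -- parity
  have hcard : L₀.length = S₀.card := Finset.length_sort _
  have hdet : LinearMap.det A = ∏ k, lam k := det_eq_prod_eig f A lam hfl
  have hsplitdet : ∏ k, lam k = (-1:ℝ)^(S₀.card) * ∏ k, |lam k| := by
    have hpt : ∀ k : Fin n, lam k = (if lam k < 0 then (-1:ℝ) else 1) * |lam k| := by
      intro k
      by_cases h : lam k < 0
      · rw [if_pos h, abs_of_neg h]; ring
      · rw [if_neg h, abs_of_nonneg (not_lt.mp h), one_mul]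
    rw [Finset.prod_congr rfl fun k _ => hpt k, Finset.prod_mul_distrib]
    congr 1
    rw [Finset.prod_ite, Finset.prod_const, Finset.prod_const, one_pow, mul_one, hS₀]
  have habs : 0 < ∏ k, |lam k| := Finset.prod_pos fun k _ => abs_pos.mpr (hlam0 k)
  have hmem := wprod_mem_evenOdd (⇑f) L₀
  constructor
  · intro hpos
    have heven : Even S₀.card := by
      by_contra hodd
      have h1 : (-1:ℝ)^S₀.card = -1 := Odd.neg_one_pow (Nat.not_even_iff_odd.mp hodd)
      rw [hdet, hsplitdet, h1] at hpos
      nlinarith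
    have hcast : ((L₀.length : ℕ) : ZMod 2) = 0 := by
      rw [hcard]
      exact (ZMod.natCast_eq_zero_iff _ 2).mpr heven.two_dvd
    rw [hcast] at hmem
    exact ⟨ω, hmem, hker⟩
  · intro hneg
    have hodd : Odd S₀.card := by
      by_contra heven'
      have h1 : (-1:ℝ)^S₀.card = 1 := Even.neg_one_pow (Nat.not_odd_iff_even.mp heven')
      rw [hdet, hsplitdet, h1] at hneg
      nlinarith
    have hcast : ((L₀.length : ℕ) : ZMod 2) = 1 := by
      rw [hcard]
      obtain ⟨t, ht⟩ := hodd
      rw [ht]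
      push_cast
      have h2 : ((2:ℕ) : ZMod 2) = 0 := by decide
      push_cast at h2
      rw [h2]
      ring
    rw [hcast] at hmem
    exact ⟨ω, hmem, hker⟩
end

section
/- Let K = tr|A|·id + Â with A : E → E invertible self-adjoint on an n-dimensional real inner product space E. For any ω ∈ Λ*E^*, ⟨Kω, ω⟩ ≥ 0, i.e. K is positive semi-definite. -/
/- We model the exterior algebra `Λ*E^*` of a finite-dimensional real inner product
space `E` by `ExteriorAlgebra ℝ E`, identifying `E ≅ E^*` via the inner product.
`extMul v` is exterior multiplication by `v^*` and `intMul v` is interior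
multiplication (contraction) by `v`. -/

open ExteriorAlgebra RealInnerProductSpace

variable {E : Type*} [NormedAddCommGroup E] [InnerProductSpace ℝ E] [FiniteDimensional ℝ E]

/-- The wedge product `v 0 ∧ v 1 ∧ ⋯ ∧ v (k-1)` in the exterior algebra. -/
noncomputable def wedgeList {k : ℕ} (v : Fin k → E) : ExteriorAlgebra ℝ E :=
  (List.ofFn fun i => ExteriorAlgebra.ι ℝ (v i)).prod

/-- `B` is the inner product on `Λ*E^*` induced by the inner product of `E`:
it is symmetric, wedge products of vectors pair by the Gram determinant, and
elements of different degrees are orthogonal.  These conditions determine `B`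
uniquely, and make wedge products of orthonormal covectors orthonormal. -/
def IsInducedInner (B : ExteriorAlgebra ℝ E →ₗ[ℝ] ExteriorAlgebra ℝ E →ₗ[ℝ] ℝ) : Prop :=
  (∀ x y, B x y = B y x) ∧
  (∀ (k : ℕ) (v w : Fin k → E),
    B (wedgeList v) (wedgeList w) = Matrix.det (Matrix.of fun i j => ⟪v i, w j⟫)) ∧
  (∀ (k l : ℕ) (v : Fin k → E) (w : Fin l → E), k ≠ l →
    B (wedgeList v) (wedgeList w) = 0)

set_option linter.unusedSectionVars false
set_option linter.unusedVariables false
set_option maxHeartbeats 1000000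

lemma intMul_extMul (v w : E) (x : ExteriorAlgebra ℝ E) :
    intMul w (extMul v x) = ⟪w, v⟫ • x - extMul v (intMul w x) := by
  simpa [intMul, extMul] using
    CliffordAlgebra.contractLeft_ι_mul (d := (innerSL ℝ w).toLinearMap) v x

lemma extMul_extMul (v : E) (x : ExteriorAlgebra ℝ E) :
    extMul v (extMul v x) = 0 := by
  simp [extMul, ← mul_assoc, ExteriorAlgebra.ι_sq_zero]

lemma wedgeList_eq_iMulti {k : ℕ} (v : Fin k → E) :
    wedgeList v = ExteriorAlgebra.ιMulti ℝ k v :=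
  (ExteriorAlgebra.ιMulti_apply v).symm

lemma ι_mul_wedge (v : E) {k : ℕ} (u : Fin k → E) :
    ExteriorAlgebra.ι ℝ v * wedgeList u = wedgeList (Fin.cons v u) := by
  simp [wedgeList, List.ofFn_succ]

lemma comp_append {α β : Type*} (f : α → β) {k l : ℕ} (a : Fin k → α) (b : Fin l → α) :
    f ∘ Fin.append a b = Fin.append (f ∘ a) (f ∘ b) := by
  funext i
  cases i using Fin.addCases with
  | left j => simp [Fin.append_left]
  | right j => simp [Fin.append_right]

lemma wedge_mul {k l : ℕ} (u : Fin k → E) (w : Fin l → E) :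
    wedgeList u * wedgeList w = wedgeList (Fin.append u w) := by
  unfold wedgeList
  rw [← List.prod_append, ← List.ofFn_fin_append]
  congr 1
  exact congrArg List.ofFn (comp_append (fun x => ExteriorAlgebra.ι ℝ x) u w).symm

lemma intMul_wedge (v : E) : ∀ {l : ℕ} (w : Fin (l + 1) → E),
    intMul v (wedgeList w)
      = ∑ i : Fin (l + 1), ((-1 : ℝ) ^ (i : ℕ) * ⟪v, w i⟫) • wedgeList (w ∘ i.succAbove) := by
  intro l
  induction l with
  | zero =>
    intro w
    have h1 : wedgeList w = ExteriorAlgebra.ι ℝ (w 0) := by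
      simp [wedgeList, List.ofFn_succ]
    have h0 : wedgeList (w ∘ (0 : Fin 1).succAbove) = 1 := by
      simp [wedgeList]
    rw [h1, Fin.sum_univ_one, h0]
    rw [intMul, CliffordAlgebra.contractLeft_ι]
    simp [Algebra.algebraMap_eq_smul_one]
  | succ m ih =>
    intro w
    have hw : wedgeList w = extMul (w 0) (wedgeList (w ∘ Fin.succ)) := by
      rw [extMul, LinearMap.mulLeft_apply, ι_mul_wedge]
      congr 1
      exact (Fin.cons_self_tail w).symm
    rw [hw, intMul_extMul, ih (w ∘ Fin.succ), map_sum]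
    simp only [map_smul]
    conv_rhs => rw [Fin.sum_univ_succ]
    have hterm : ∀ j : Fin (m + 1),
        ((-1 : ℝ) ^ ((j.succ : Fin (m + 2)) : ℕ) * ⟪v, w j.succ⟫) • wedgeList (w ∘ (j.succ).succAbove)
          = -(((-1 : ℝ) ^ (j : ℕ) * ⟪v, (w ∘ Fin.succ) j⟫) •
              (extMul (w 0) (wedgeList ((w ∘ Fin.succ) ∘ j.succAbove)))) := by
      intro j
      have hfam : w ∘ (j.succ).succAbove = Fin.cons (w 0) ((w ∘ Fin.succ) ∘ j.succAbove) := by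
        funext i
        cases i using Fin.cases with
        | zero => simp
        | succ i => simp [Fin.succ_succAbove_succ]
      rw [hfam, extMul, LinearMap.mulLeft_apply, ι_mul_wedge]
      rw [Fin.val_succ, pow_succ]
      ring_nf
      rw [← neg_smul]
      rfl
    rw [Finset.sum_congr rfl (fun j _ => hterm j)]
    simp only [Fin.val_zero, pow_zero, one_mul, Fin.succAbove_zero]
    rw [Finset.sum_neg_distrib]
    abel

def wedgeSet (E : Type*) [NormedAddCommGroup E] [InnerProductSpace ℝ E] :
    Set (ExteriorAlgebra ℝ E) := {x | ∃ (k : ℕ) (v : Fin k → E), x = wedgeList v}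

lemma span_wedgeSet : Submodule.span ℝ (wedgeSet E) = ⊤ := by
  rw [eq_top_iff]
  rintro x -
  induction x using ExteriorAlgebra.induction with
  | algebraMap r =>
    have h1 : (1 : ExteriorAlgebra ℝ E) ∈ wedgeSet E := ⟨0, Fin.elim0, by simp [wedgeList]⟩
    rw [Algebra.algebraMap_eq_smul_one]
    exact Submodule.smul_mem _ r (Submodule.subset_span h1)
  | ι v =>
    exact Submodule.subset_span ⟨1, fun _ => v, by simp [wedgeList, List.ofFn_succ]⟩
  | mul a b ha hb =>
    induction ha, hb using Submodule.span_induction₂ with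
    | mem_mem x y hx hy =>
      obtain ⟨k, u, rfl⟩ := hx; obtain ⟨l, w, rfl⟩ := hy
      exact Submodule.subset_span ⟨k + l, Fin.append u w, (wedge_mul u w)⟩
    | zero_left y hy => simp
    | zero_right x hx => simp
    | add_left x y z hx hy hz h1 h2 => rw [add_mul]; exact Submodule.add_mem _ h1 h2
    | add_right x y z hx hy hz h1 h2 => rw [mul_add]; exact Submodule.add_mem _ h1 h2
    | smul_left r x y hx hy h => rw [smul_mul_assoc]; exact Submodule.smul_mem _ r h
    | smul_right r x y hx hy h => rw [mul_smul_comm]; exact Submodule.smul_mem _ r h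
  | add a b ha hb => exact Submodule.add_mem _ ha hb

lemma B_ext_int {B : ExteriorAlgebra ℝ E →ₗ[ℝ] ExteriorAlgebra ℝ E →ₗ[ℝ] ℝ}
    (hB : IsInducedInner B) (v : E) (x y : ExteriorAlgebra ℝ E) :
    B (extMul v x) y = B x (intMul v y) := by
  have hx : x ∈ Submodule.span ℝ (wedgeSet E) := by rw [span_wedgeSet]; trivial
  have hy : y ∈ Submodule.span ℝ (wedgeSet E) := by rw [span_wedgeSet]; trivial
  induction hx, hy using Submodule.span_induction₂ with
  | mem_mem x y hx hy =>
    obtain ⟨k, u, rfl⟩ := hx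
    obtain ⟨l, w, rfl⟩ := hy
    have hL : extMul v (wedgeList u) = wedgeList (Fin.cons v u) := by
      rw [extMul, LinearMap.mulLeft_apply, ι_mul_wedge]
    match l, w with
    | 0, w =>
      have h1 : intMul v (wedgeList w) = 0 := by
        have : wedgeList w = (1 : ExteriorAlgebra ℝ E) := by simp [wedgeList]
        rw [this, intMul_one]
      rw [hL, h1, map_zero]
      exact hB.2.2 (k + 1) 0 _ w (by omega)
    | (m + 1), w =>
      rw [hL, intMul_wedge, map_sum]
      simp only [map_smul, smul_eq_mul]
      by_cases hkm : k = m
      · subst hkm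
        rw [hB.2.1 (k + 1) (Fin.cons v u) w, Matrix.det_succ_row_zero]
        refine Finset.sum_congr rfl fun j _ => ?_
        rw [hB.2.1 k u (w ∘ j.succAbove)]
        have hsub : (Matrix.of fun (i j2 : Fin (k + 1)) =>
              (inner ℝ ((Fin.cons v u : Fin (k + 1) → E) i) (w j2) : ℝ)).submatrix
                Fin.succ j.succAbove
            = Matrix.of fun (i j2 : Fin k) => (inner ℝ (u i) ((w ∘ j.succAbove) j2) : ℝ) := by
          ext i j2
          simp [Fin.cons_succ]
        rw [hsub]
        simp [Matrix.of_apply, Fin.cons_zero]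
      · rw [hB.2.2 (k + 1) (m + 1) _ _ (by omega), Finset.sum_eq_zero]
        intro j _
        rw [hB.2.2 k m u (w ∘ j.succAbove) hkm, mul_zero]
  | zero_left y hy => simp
  | zero_right x hx => simp
  | add_left x y z hx hy hz h1 h2 => simp [map_add, LinearMap.add_apply, h1, h2]
  | add_right x y z hx hy hz h1 h2 => simp [map_add, h1, h2]
  | smul_left r x y hx hy h => simp [map_smul, LinearMap.smul_apply, h]
  | smul_right r x y hx hy h => simp [map_smul, h]

noncomputable def wS {n : ℕ} (e : OrthonormalBasis (Fin n) ℝ E) (S : Finset (Fin n)) :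
    ExteriorAlgebra ℝ E :=
  wedgeList fun i : Fin S.card => e (S.orderEmbOfFin rfl i)

lemma wS_eq {n : ℕ} (e : OrthonormalBasis (Fin n) ℝ E) {S : Finset (Fin n)} {k : ℕ}
    (h : S.card = k) :
    wedgeList (fun i : Fin k => e (S.orderEmbOfFin h i)) = wS e S := by
  subst h; rfl

lemma B_wS {n : ℕ} (e : OrthonormalBasis (Fin n) ℝ E)
    {B : ExteriorAlgebra ℝ E →ₗ[ℝ] ExteriorAlgebra ℝ E →ₗ[ℝ] ℝ} (hB : IsInducedInner B)
    (S T : Finset (Fin n)) :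
    B (wS e S) (wS e T) = if S = T then 1 else 0 := by
  by_cases hST : S = T
  · subst hST
    rw [if_pos rfl, wS, hB.2.1]
    have h1 : (Matrix.of fun i j =>
          (⟪e (S.orderEmbOfFin rfl i), e (S.orderEmbOfFin rfl j)⟫ : ℝ))
        = (1 : Matrix (Fin S.card) (Fin S.card) ℝ) := by
      ext i j
      rw [Matrix.of_apply, orthonormal_iff_ite.mp e.orthonormal, Matrix.one_apply]
      simp [(S.orderEmbOfFin rfl).injective.eq_iff]
    rw [h1, Matrix.det_one]
  · rw [if_neg hST]
    by_cases hcard : S.card = T.card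
    · rw [wS, ← wS_eq e hcard.symm, hB.2.1]
      obtain ⟨a, haS, haT⟩ : ∃ a, a ∈ S ∧ a ∉ T := by
        by_contra hcon
        push_neg at hcon
        exact hST (Finset.eq_of_subset_of_card_le hcon (le_of_eq hcard.symm))
      obtain ⟨i0, hi0⟩ : ∃ i0, S.orderEmbOfFin rfl i0 = a := by
        have hr := S.range_orderEmbOfFin rfl
        have : a ∈ Set.range (S.orderEmbOfFin rfl) := by rw [hr]; exact_mod_cast haS
        exact this
      apply Matrix.det_eq_zero_of_row_eq_zero i0
      intro j
      rw [Matrix.of_apply, orthonormal_iff_ite.mp e.orthonormal, if_neg]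
      intro hc
      exact haT (hi0 ▸ hc ▸ T.orderEmbOfFin_mem hcard.symm j)
    · rw [wS, wS]
      exact hB.2.2 _ _ _ _ hcard

lemma mem_span_wS {n : ℕ} (e : OrthonormalBasis (Fin n) ℝ E) {k : ℕ} (g : Fin k → Fin n) :
    wedgeList (⇑e ∘ g) ∈ Submodule.span ℝ (Set.range (wS e)) := by
  by_cases hg : Function.Injective g
  · set S : Finset (Fin n) := Finset.image g Finset.univ with hS
    have hcard : S.card = k := by
      rw [hS, Finset.card_image_of_injective _ hg, Finset.card_univ, Fintype.card_fin]
    have hmem : ∀ i, g i ∈ S := fun i => Finset.mem_image_of_mem g (Finset.mem_univ i)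
    set σ0 : Fin k → Fin k := fun i => (S.orderIsoOfFin hcard).symm ⟨g i, hmem i⟩ with hσ0
    have hs : ∀ i, S.orderEmbOfFin hcard (σ0 i) = g i := by
      intro i
      rw [← Finset.coe_orderIsoOfFin_apply]
      simp [hσ0]
    have hinj : Function.Injective σ0 := by
      intro i j hij
      apply hg
      rw [← hs i, ← hs j, hij]
    let σ : Equiv.Perm (Fin k) := Equiv.ofBijective σ0 (Finite.injective_iff_bijective.mp hinj)
    have hcomp : ⇑e ∘ g = (fun i => e (S.orderEmbOfFin hcard i)) ∘ σ := by
      funext i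
      simp only [Function.comp_apply]
      rw [show σ i = σ0 i from rfl, hs i]
    rw [wedgeList_eq_iMulti, hcomp, AlternatingMap.map_perm]
    have hW : (ExteriorAlgebra.ιMulti ℝ k) (fun i => e (S.orderEmbOfFin hcard i)) = wS e S := by
      rw [← wedgeList_eq_iMulti, wS_eq]
    rw [hW]
    rcases Int.units_eq_one_or (Equiv.Perm.sign σ) with h | h <;> rw [h]
    · rw [one_smul]
      exact Submodule.subset_span (Set.mem_range_self S)
    · rw [Units.neg_smul, one_smul]
      exact Submodule.neg_mem _ (Submodule.subset_span (Set.mem_range_self S))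
  · have hng : ¬Function.Injective (⇑e ∘ g) := fun h => hg (Function.Injective.of_comp h)
    rw [wedgeList_eq_iMulti, AlternatingMap.map_eq_zero_of_not_injective _ _ hng]
    exact Submodule.zero_mem _

lemma span_wS_top {n : ℕ} (e : OrthonormalBasis (Fin n) ℝ E) :
    Submodule.span ℝ (Set.range (wS e)) = ⊤ := by
  rw [eq_top_iff]
  rintro x -
  induction x using ExteriorAlgebra.induction with
  | algebraMap r =>
    rw [Algebra.algebraMap_eq_smul_one]
    refine Submodule.smul_mem _ r ?_
    have h := mem_span_wS e (Fin.elim0 : Fin 0 → Fin n)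
    simpa [wedgeList] using h
  | ι v =>
    have hv : ExteriorAlgebra.ι ℝ v = ∑ j, ⟪e j, v⟫ • ExteriorAlgebra.ι ℝ (e j) := by
      conv_lhs => rw [← e.sum_repr' v]
      rw [map_sum]
      simp only [map_smul]
    rw [hv]
    refine Submodule.sum_mem _ fun j _ => Submodule.smul_mem _ _ ?_
    have h := mem_span_wS e (fun _ : Fin 1 => j)
    simpa [wedgeList, List.ofFn_succ] using h
  | mul a b ha hb =>
    induction ha, hb using Submodule.span_induction₂ with
    | mem_mem x y hx hy =>
      obtain ⟨S, rfl⟩ := hx; obtain ⟨T, rfl⟩ := hy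
      rw [wS, wS, wedge_mul]
      rw [show Fin.append (fun i : Fin S.card => e (S.orderEmbOfFin rfl i))
            (fun i : Fin T.card => e (T.orderEmbOfFin rfl i))
          = ⇑e ∘ Fin.append (⇑(S.orderEmbOfFin rfl)) (⇑(T.orderEmbOfFin rfl)) from by
        rw [comp_append]; rfl]
      exact mem_span_wS e _
    | zero_left y hy => simp
    | zero_right x hx => simp
    | add_left x y z hx hy hz h1 h2 => rw [add_mul]; exact Submodule.add_mem _ h1 h2
    | add_right x y z hx hy hz h1 h2 => rw [mul_add]; exact Submodule.add_mem _ h1 h2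
    | smul_left r x y hx hy h => rw [smul_mul_assoc]; exact Submodule.smul_mem _ r h
    | smul_right r x y hx hy h => rw [mul_smul_comm]; exact Submodule.smul_mem _ r h
  | add a b ha hb => exact Submodule.add_mem _ ha hb

lemma B_nonneg {n : ℕ} (e : OrthonormalBasis (Fin n) ℝ E)
    {B : ExteriorAlgebra ℝ E →ₗ[ℝ] ExteriorAlgebra ℝ E →ₗ[ℝ] ℝ} (hB : IsInducedInner B)
    (ω : ExteriorAlgebra ℝ E) : 0 ≤ B ω ω := by
  have hω : ω ∈ Submodule.span ℝ (Set.range (wS e)) := by rw [span_wS_top]; trivial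
  obtain ⟨c, hc⟩ := (Submodule.mem_span_range_iff_exists_fun ℝ).mp hω
  rw [← hc]
  simp only [map_sum, map_smul, LinearMap.sum_apply, LinearMap.smul_apply, smul_eq_mul,
    B_wS e hB, mul_ite, mul_one, mul_zero, Finset.sum_ite_eq, Finset.sum_ite_eq', Finset.mem_univ, if_true]
  exact Finset.sum_nonneg fun S _ => mul_self_nonneg (c S)

section OpAlgebra

variable {B : ExteriorAlgebra ℝ E →ₗ[ℝ] ExteriorAlgebra ℝ E →ₗ[ℝ] ℝ}

lemma B_int_ext (hB : IsInducedInner B) (v : E) (x y : ExteriorAlgebra ℝ E) :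
    B (intMul v x) y = B x (extMul v y) :=
  calc B (intMul v x) y = B y (intMul v x) := hB.1 _ _
    _ = B (extMul v y) x := (B_ext_int hB v y x).symm
    _ = B x (extMul v y) := hB.1 _ _

lemma B_hcl (hB : IsInducedInner B) (v : E) (x y : ExteriorAlgebra ℝ E) :
    B (hcl v x) y = B x (hcl v y) := by
  simp only [hcl, LinearMap.add_apply, map_add]
  rw [B_ext_int hB, B_int_ext hB]
  ring

lemma B_cl (hB : IsInducedInner B) (v : E) (x y : ExteriorAlgebra ℝ E) :
    B (cl v x) y = -(B x (cl v y)) := by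
  simp only [cl, LinearMap.sub_apply, map_sub]
  rw [B_ext_int hB, B_int_ext hB]
  ring

lemma hcl_cl (f : E) (hf : (⟪f, f⟫ : ℝ) = 1) (x : ExteriorAlgebra ℝ E) :
    hcl f (cl f x) = -(cl f (hcl f x)) := by
  have hie : ∀ z : ExteriorAlgebra ℝ E,
      intMul f (extMul f z) = z - extMul f (intMul f z) := fun z => by
    rw [intMul_extMul, hf, one_smul]
  simp only [cl, hcl, LinearMap.sub_apply, LinearMap.add_apply, map_add, map_sub,
    extMul_extMul, intMul_intMul, hie, map_zero]
  abel

lemma TT (f : E) (hf : (⟪f, f⟫ : ℝ) = 1) (x : ExteriorAlgebra ℝ E) :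
    cl f (hcl f (cl f (hcl f x))) = x := by
  have hie : ∀ z : ExteriorAlgebra ℝ E,
      intMul f (extMul f z) = z - extMul f (intMul f z) := fun z => by
    rw [intMul_extMul, hf, one_smul]
  simp only [cl, hcl, LinearMap.sub_apply, LinearMap.add_apply, map_add, map_sub,
    extMul_extMul, intMul_intMul, hie, map_zero, zero_sub, sub_zero, zero_add, add_zero,
    map_neg, neg_neg, neg_sub, sub_neg_eq_add]
  abel

lemma B_T (hB : IsInducedInner B) (f : E) (hf : (⟪f, f⟫ : ℝ) = 1)
    (x y : ExteriorAlgebra ℝ E) :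
    B (cl f (hcl f x)) y = B x (cl f (hcl f y)) := by
  rw [B_cl hB, B_hcl hB, hcl_cl f hf, map_neg, neg_neg]

lemma abs_B_T_le {n : ℕ} (e : OrthonormalBasis (Fin n) ℝ E) (hB : IsInducedInner B)
    (f : E) (hf : (⟪f, f⟫ : ℝ) = 1) (ω : ExteriorAlgebra ℝ E) :
    |B (cl f (hcl f ω)) ω| ≤ B ω ω := by
  set z := cl f (hcl f ω) with hz
  have hzz : B z z = B ω ω := by
    rw [hz, B_T hB f hf, TT f hf]
  have h1 : 0 ≤ B (z + ω) (z + ω) := B_nonneg e hB _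
  have h2 : 0 ≤ B (z - ω) (z - ω) := B_nonneg e hB _
  simp only [map_add, map_sub, LinearMap.add_apply, LinearMap.sub_apply] at h1 h2
  have hsym : B z ω = B ω z := hB.1 _ _
  rw [abs_le]
  constructor <;> linarith

end OpAlgebra

lemma intMul_vadd (v w : E) : intMul (v + w) = intMul v + intMul w := by
  unfold intMul
  have h1 : ((innerSL ℝ (v + w)).toLinearMap : Module.Dual ℝ E)
      = (innerSL ℝ v).toLinearMap + (innerSL ℝ w).toLinearMap := by
    ext z; simp [inner_add_left]
  rw [h1, map_add]

lemma intMul_vsmul (r : ℝ) (v : E) : intMul (r • v) = r • intMul v := by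
  unfold intMul
  have h1 : ((innerSL ℝ (r • v)).toLinearMap : Module.Dual ℝ E)
      = r • (innerSL ℝ v).toLinearMap := by
    ext z; simp [inner_smul_left]
  rw [h1, map_smul]

lemma extMul_vadd (v w : E) : extMul (v + w) = extMul v + extMul w := by
  unfold extMul
  ext z
  simp [map_add, add_mul]

lemma extMul_vsmul (r : ℝ) (v : E) : extMul (r • v) = r • extMul v := by
  unfold extMul
  ext z
  simp [map_smul, smul_mul_assoc]

noncomputable def clApp (x : ExteriorAlgebra ℝ E) : E →ₗ[ℝ] ExteriorAlgebra ℝ E where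
  toFun v := cl v x
  map_add' v w := by
    simp only [cl, extMul_vadd, intMul_vadd, LinearMap.sub_apply, LinearMap.add_apply]
    abel
  map_smul' r v := by
    simp only [cl, extMul_vsmul, intMul_vsmul, LinearMap.sub_apply, LinearMap.smul_apply,
      RingHom.id_apply, smul_sub]

noncomputable def hclApp (x : ExteriorAlgebra ℝ E) : E →ₗ[ℝ] ExteriorAlgebra ℝ E where
  toFun v := hcl v x
  map_add' v w := by
    simp only [hcl, extMul_vadd, intMul_vadd, LinearMap.add_apply]
    abel
  map_smul' r v := by
    simp only [hcl, extMul_vsmul, intMul_vsmul, LinearMap.add_apply, LinearMap.smul_apply,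
      RingHom.id_apply, smul_add]

lemma hatA_apply {n : ℕ} (e : OrthonormalBasis (Fin n) ℝ E) (A : E →ₗ[ℝ] E)
    (ω : ExteriorAlgebra ℝ E) :
    hatA (⇑e) A ω = ∑ j, cl (A (e j)) (hcl (e j) ω) := by
  rw [hatA]
  simp only [LinearMap.sum_apply, LinearMap.smul_apply, LinearMap.comp_apply]
  rw [Finset.sum_comm]
  refine Finset.sum_congr rfl fun j _ => ?_
  have h1 : ∀ i, ⟪A (e j), e i⟫ • cl (e i) (hcl (e j) ω)
      = clApp (hcl (e j) ω) (⟪e i, A (e j)⟫ • e i) := by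
    intro i
    rw [map_smul, real_inner_comm]
    rfl
  rw [Finset.sum_congr rfl fun i _ => h1 i, ← map_sum, e.sum_repr']
  rfl

lemma sum_cl_hcl {n : ℕ} (e f : OrthonormalBasis (Fin n) ℝ E) (A : E →ₗ[ℝ] E)
    (ω : ExteriorAlgebra ℝ E) :
    ∑ j, cl (A (e j)) (hcl (e j) ω) = ∑ k, cl (A (f k)) (hcl (f k) ω) := by
  have expand : ∀ j, cl (A (e j)) (hcl (e j) ω)
      = ∑ k, ∑ l, (⟪f k, e j⟫ * ⟪f l, e j⟫) • cl (A (f k)) (hcl (f l) ω) := by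
    intro j
    calc cl (A (e j)) (hcl (e j) ω)
        = clApp (hcl (e j) ω) (A (∑ k, ⟪f k, e j⟫ • f k)) := by rw [f.sum_repr']; rfl
      _ = ∑ k, ⟪f k, e j⟫ • cl (A (f k)) (hcl (e j) ω) := by
          rw [map_sum, map_sum]
          simp only [map_smul]
          rfl
      _ = ∑ k, ⟪f k, e j⟫ • cl (A (f k)) (hclApp ω (∑ l, ⟪f l, e j⟫ • f l)) := by
          rw [f.sum_repr']; rfl
      _ = ∑ k, ∑ l, (⟪f k, e j⟫ * ⟪f l, e j⟫) • cl (A (f k)) (hcl (f l) ω) := by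
          refine Finset.sum_congr rfl fun k _ => ?_
          rw [map_sum, map_sum, Finset.smul_sum]
          simp only [map_smul, smul_smul]
          rfl
  have key : ∀ k l, (∑ j, ⟪f k, e j⟫ * ⟪f l, e j⟫) = if k = l then (1 : ℝ) else 0 := by
    intro k l
    calc (∑ j, ⟪f k, e j⟫ * ⟪f l, e j⟫) = ∑ j, ⟪f k, e j⟫ * ⟪e j, f l⟫ :=
          Finset.sum_congr rfl fun j _ => by rw [real_inner_comm (f l) (e j)]
      _ = ⟪f k, f l⟫ := e.sum_inner_mul_inner _ _
      _ = if k = l then 1 else 0 := orthonormal_iff_ite.mp f.orthonormal k l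
  calc ∑ j, cl (A (e j)) (hcl (e j) ω)
      = ∑ j, ∑ k, ∑ l, (⟪f k, e j⟫ * ⟪f l, e j⟫) • cl (A (f k)) (hcl (f l) ω) :=
        Finset.sum_congr rfl fun j _ => expand j
    _ = ∑ k, ∑ l, (∑ j, ⟪f k, e j⟫ * ⟪f l, e j⟫) • cl (A (f k)) (hcl (f l) ω) := by
        rw [Finset.sum_comm]
        refine Finset.sum_congr rfl fun k _ => ?_
        rw [Finset.sum_comm]
        refine Finset.sum_congr rfl fun l _ => ?_
        rw [Finset.sum_smul]
    _ = ∑ k, cl (A (f k)) (hcl (f k) ω) := by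
        simp only [key, ite_smul, one_smul, zero_smul, Finset.sum_ite_eq, Finset.sum_ite_eq',
          Finset.mem_univ, if_true]


/-- `K = tr|A|·id + Â` is positive semi-definite on `Λ*E^*`: `⟨Kω, ω⟩ ≥ 0` for the
induced inner product, for `A` invertible and self-adjoint. -/
theorem Kop_nonneg {n : ℕ} (hn : Module.finrank ℝ E = n)
    (e : OrthonormalBasis (Fin n) ℝ E) (A : E →ₗ[ℝ] E)
    (hA : A.IsSymmetric) (hinv : Function.Bijective A)
    (B : ExteriorAlgebra ℝ E →ₗ[ℝ] ExteriorAlgebra ℝ E →ₗ[ℝ] ℝ)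
    (hB : IsInducedInner B) (ω : ExteriorAlgebra ℝ E) :
    0 ≤ B (Kop hn (⇑e) A hA ω) ω := by
  classical
  set f : OrthonormalBasis (Fin n) ℝ E := hA.eigenvectorBasis hn with hfdef
  set μ : Fin n → ℝ := hA.eigenvalues hn with hμdef
  have hf1 : ∀ k, (⟪f k, f k⟫ : ℝ) = 1 := fun k => by
    simpa using orthonormal_iff_ite.mp f.orthonormal k k
  have hAf : ∀ k, A (f k) = μ k • f k := fun k => by
    have h := hA.apply_eigenvectorBasis hn k
    exact_mod_cast h
  have hhat : (hatA (⇑e) A) ω = ∑ k, μ k • cl (f k) (hcl (f k) ω) := by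
    rw [hatA_apply e A ω, sum_cl_hcl e f A ω]
    refine Finset.sum_congr rfl fun k _ => ?_
    rw [hAf k]
    exact map_smul (clApp (hcl (f k) ω)) (μ k) (f k)
  have hK : B (Kop hn (⇑e) A hA ω) ω
      = ∑ k, (|μ k| * B ω ω + μ k * B (cl (f k) (hcl (f k) ω)) ω) := by
    rw [Kop, LinearMap.add_apply, LinearMap.smul_apply, LinearMap.id_apply, map_add,
      map_smul, hhat, map_sum, LinearMap.add_apply, LinearMap.smul_apply, LinearMap.sum_apply]
    simp only [map_smul, LinearMap.smul_apply, smul_eq_mul]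
    rw [Finset.sum_add_distrib, Finset.sum_mul]
  rw [hK]
  refine Finset.sum_nonneg fun k _ => ?_
  have hb := abs_B_T_le e hB (f k) (hf1 k) ω
  have habs : |μ k * B (cl (f k) (hcl (f k) ω)) ω| ≤ |μ k| * B ω ω := by
    rw [abs_mul]
    exact mul_le_mul_of_nonneg_left hb (abs_nonneg _)
  have hneg := neg_abs_le (μ k * B (cl (f k) (hcl (f k) ω)) ω)
  linarith
end
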